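/- arXiv:1603.00416 — 3 statements merged into one kernel-verified Lean document; each statement's English description precedes it below -/
import Mathlib

section
/- Let G be a unipotent algebraic group with nilpotent Lie algebra g = ⊕_{n∈N^+} g_n graded by N^+, and θ ∈ Hom(N,R). With G_⋆(θ) = exp(g_⋆(θ)) for ⋆ ∈ {+,0,-}, every element g ∈ G has a unique decomposition g = g_+ · g_0 · g_- with g_± ∈ G_±(θ) and g_0 ∈ G_0(θ). -/
/- STATEMENT 3: unique decomposition g = g₊ · g₀ · g₋ in the unipotent group G
attached to a nilpotent N⁺-graded Lie algebra.  Following §5.7 of the paper, the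
group G = exp(g) is realised inside a graded associative algebra A (with pieces
A_n vanishing for total degree δ(n) > k, so the positive part is nilpotent) as
the set 1 + A₊ of elements whose "positive part" lies in the span of the graded
pieces of nonzero degree; likewise exp(g_⋆(θ)) = 1 + A_⋆(θ) for ⋆ ∈ {+,0,-},
where A_⋆(θ) is the span of the pieces A_n (n ≠ 0) with θ(n) > 0, = 0, < 0.  -/

/-- The pairing of a real functional θ ∈ Hom(N, ℝ) with a degree n ∈ ℕ^r ⊂ N. -/
def thetaPair' {r : ℕ} (θ : Fin r → ℝ) (n : Fin r → ℕ) : ℝ := ∑ i, θ i * (n i : ℝ)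

open DirectSum

section Aux

set_option linter.unusedSectionVars false
variable {r : ℕ} {A : Type*} [Ring A] [Algebra ℂ A]
variable (𝒜 : (Fin r → ℕ) → Submodule ℂ A) [GradedAlgebra 𝒜]

/-- Span of the graded pieces with index satisfying `P`. -/
def sp (P : (Fin r → ℕ) → Prop) : Submodule ℂ A := ⨆ (n) (_ : P n), 𝒜 n

variable {𝒜}

lemma sp_mono {P Q : (Fin r → ℕ) → Prop} (h : ∀ n, P n → Q n) : sp 𝒜 P ≤ sp 𝒜 Q :=
  iSup_le fun n => iSup_le fun hn => le_iSup₂ (f := fun n (_ : Q n) => 𝒜 n) n (h n hn)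

lemma sp_congr {P Q : (Fin r → ℕ) → Prop} (h : ∀ n, P n ↔ Q n) : sp 𝒜 P = sp 𝒜 Q :=
  le_antisymm (sp_mono fun n hn => (h n).1 hn) (sp_mono fun n hn => (h n).2 hn)

lemma mem_sp {P : (Fin r → ℕ) → Prop} {x : A} :
    x ∈ sp 𝒜 P ↔ ∀ n, (decompose 𝒜 x n : A) ≠ 0 → P n := by
  classical
  constructor
  · intro hx n hn
    by_contra hPn
    refine hn ?_
    have : ∀ y : A, y ∈ sp 𝒜 P → (decompose 𝒜 y n : A) = 0 := by
      intro y hy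
      refine Submodule.iSup_induction (motive := fun y => (decompose 𝒜 y n : A) = 0) _ hy ?_ ?_ ?_
      · intro m y hy
        by_cases hPm : P m
        · rw [iSup_pos hPm] at hy
          rw [decompose_coe 𝒜 ⟨y, hy⟩]
          rcases eq_or_ne m n with rfl | hmn
          · exact absurd hPm hPn
          · rw [DirectSum.of_eq_of_ne _ _ _ hmn.symm]; rfl
        · rw [iSup_neg hPm] at hy
          simp_all
      · simp
      · intro a b ha hb
        simp [decompose_add, DirectSum.add_apply, ha, hb]
    exact this x hx
  · intro h
    have hx : x = ∑ n ∈ (decompose 𝒜 x).support, (decompose 𝒜 x n : A) :=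
      (DirectSum.sum_support_decompose 𝒜 x).symm
    rw [hx]
    refine Submodule.sum_mem _ fun n hn => ?_
    have hPn : P n := h n (by simpa using DFinsupp.mem_support_iff.mp hn)
    exact le_iSup₂ (f := fun n (_ : P n) => 𝒜 n) n hPn (SetLike.coe_mem _)

lemma sp_eq_bot {P : (Fin r → ℕ) → Prop} (h : ∀ n, P n → 𝒜 n = ⊥) : sp 𝒜 P = ⊥ :=
  le_bot_iff.mp <| iSup_le fun n => iSup_le fun hn => (h n hn) ▸ le_rfl

lemma sp_disjoint {P Q : (Fin r → ℕ) → Prop} (h : ∀ n, P n → Q n → False) {x : A}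
    (hx : x ∈ sp 𝒜 P) (hy : x ∈ sp 𝒜 Q) : x = 0 := by
  classical
  have hsupp : ∀ n, (decompose 𝒜 x n : A) = 0 := by
    intro n
    by_contra hn
    exact h n (mem_sp.mp hx n hn) (mem_sp.mp hy n hn)
  calc x = ∑ n ∈ (decompose 𝒜 x).support, (decompose 𝒜 x n : A) :=
        (DirectSum.sum_support_decompose 𝒜 x).symm
    _ = 0 := Finset.sum_eq_zero fun n _ => hsupp n

lemma sp_mul {P Q R : (Fin r → ℕ) → Prop} (h : ∀ n m, P n → Q m → R (n + m)) {x y : A}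
    (hx : x ∈ sp 𝒜 P) (hy : y ∈ sp 𝒜 Q) : x * y ∈ sp 𝒜 R := by
  have hle : sp 𝒜 P * sp 𝒜 Q ≤ sp 𝒜 R := by
    rw [sp, Submodule.iSup_mul]
    refine iSup_le fun n => ?_
    rw [Submodule.iSup_mul]
    refine iSup_le fun hn => ?_
    rw [show (sp 𝒜 Q : Submodule ℂ A) = ⨆ (m) (_ : Q m), 𝒜 m from rfl, Submodule.mul_iSup]
    refine iSup_le fun m => ?_
    rw [Submodule.mul_iSup]
    refine iSup_le fun hm => ?_
    refine le_trans (Submodule.mul_le.mpr fun a ha b hb => ?_)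
      (le_iSup₂ (f := fun n (_ : R n) => 𝒜 n) (n + m) (h n m hn hm))
    exact SetLike.mul_mem_graded ha hb
  exact hle (Submodule.mul_mem_mul hx hy)

lemma sp_split (P R : (Fin r → ℕ) → Prop) {x : A} (hx : x ∈ sp 𝒜 R) :
    ∃ a b : A, a ∈ sp 𝒜 (fun n => R n ∧ P n) ∧ b ∈ sp 𝒜 (fun n => R n ∧ ¬ P n) ∧ x = a + b := by
  classical
  set d := decompose 𝒜 x with hd
  refine ⟨(decompose 𝒜).symm (d.filter P), (decompose 𝒜).symm (d.filter fun n => ¬ P n), ?_, ?_, ?_⟩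
  · rw [mem_sp]
    intro n hn
    rw [Equiv.apply_symm_apply] at hn
    rw [DFinsupp.filter_apply] at hn
    by_cases hPn : P n
    · rw [if_pos hPn] at hn
      exact ⟨mem_sp.mp hx n hn, hPn⟩
    · rw [if_neg hPn] at hn; simp at hn
  · rw [mem_sp]
    intro n hn
    rw [Equiv.apply_symm_apply] at hn
    rw [DFinsupp.filter_apply] at hn
    by_cases hPn : P n
    · rw [if_neg (by simpa using hPn)] at hn; simp at hn
    · rw [if_pos hPn] at hn
      exact ⟨mem_sp.mp hx n hn, hPn⟩
  · conv_lhs => rw [← (decompose 𝒜).symm_apply_apply x]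
    rw [← decompose_symm_add]
    congr 1
    exact (DFinsupp.filter_pos_add_filter_neg d P).symm


lemma sp_pow {P : (Fin r → ℕ) → Prop} (hP : ∀ n m, P n → P m → P (n + m)) (m : ℕ) {x : A}
    (hx : x ∈ sp 𝒜 (fun n => P n ∧ m ≤ ∑ i, n i)) :
    ∀ j : ℕ, x ^ (j + 1) ∈ sp 𝒜 (fun n => P n ∧ (j + 1) * m ≤ ∑ i, n i) := by
  intro j
  induction j with
  | zero => simpa using hx
  | succ j ih =>
    have key : ∀ n n' : Fin r → ℕ, (P n ∧ (j + 1) * m ≤ ∑ i, n i) → (P n' ∧ m ≤ ∑ i, n' i) →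
        (P (n + n') ∧ (j + 1 + 1) * m ≤ ∑ i, (n + n') i) := by
      rintro n n' ⟨hn, hdn⟩ ⟨hn', hdn'⟩
      refine ⟨hP _ _ hn hn', ?_⟩
      have hsum : (∑ i, (n + n') i) = (∑ i, n i) + ∑ i, n' i := by
        simp [Finset.sum_add_distrib]
      have : (j + 1 + 1) * m = (j + 1) * m + m := by ring
      rw [hsum, this]
      exact add_le_add hdn hdn'
    have := sp_mul (R := fun n => P n ∧ (j + 1 + 1) * m ≤ ∑ i, n i) key ih hx
    rw [← pow_succ] at this
    exact this

lemma inv_lemma (k : ℕ) (hbound : ∀ n : Fin r → ℕ, (∑ i, n i) > k → 𝒜 n = ⊥)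
    {P : (Fin r → ℕ) → Prop} (hP : ∀ n m, P n → P m → P (n + m)) {m : ℕ} (hm : 1 ≤ m) {x : A}
    (hx : x ∈ sp 𝒜 (fun n => P n ∧ m ≤ ∑ i, n i)) :
    ∃ y : A, y ∈ sp 𝒜 (fun n => P n ∧ m ≤ ∑ i, n i) ∧
      (1 + x) * (1 + y) = 1 ∧ (1 + y) * (1 + x) = 1 ∧
      x + y ∈ sp 𝒜 (fun n => P n ∧ 2 * m ≤ ∑ i, n i) := by
  have hnegx : -x ∈ sp 𝒜 (fun n => P n ∧ m ≤ ∑ i, n i) := neg_mem hx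
  have hpow := sp_pow hP m hnegx
  have hnil : (-x) ^ (k + 2) = 0 := by
    have h1 := hpow (k + 1)
    have hb : sp 𝒜 (fun n => P n ∧ (k + 1 + 1) * m ≤ ∑ i, n i) = ⊥ := by
      refine sp_eq_bot fun n hn => hbound n ?_
      have := hn.2
      nlinarith
    rw [hb] at h1
    simpa using h1
  refine ⟨∑ j ∈ Finset.range (k + 1), (-x) ^ (j + 1), ?_, ?_, ?_, ?_⟩
  · refine Submodule.sum_mem _ fun j _ => ?_
    refine sp_mono (fun n hn => ⟨hn.1, le_trans ?_ hn.2⟩) (hpow j)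
    exact Nat.le_mul_of_pos_left m (Nat.succ_pos j)
  · have hsum : 1 + ∑ j ∈ Finset.range (k + 1), (-x) ^ (j + 1)
        = ∑ j ∈ Finset.range (k + 2), (-x) ^ j := by
      rw [Finset.sum_range_succ' (fun j => (-x) ^ j) (k + 1)]
      simp [add_comm]
    have hgeo := mul_geom_sum (-x) (k + 2)
    rw [hnil] at hgeo
    have h2 : (1 + x) * (1 + ∑ j ∈ Finset.range (k + 1), (-x) ^ (j + 1))
        = -((-x - 1) * ∑ i ∈ Finset.range (k + 2), (-x) ^ i) := by
      rw [hsum]; noncomm_ring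
    rw [h2, hgeo]; simp
  · have hsum : 1 + ∑ j ∈ Finset.range (k + 1), (-x) ^ (j + 1)
        = ∑ j ∈ Finset.range (k + 2), (-x) ^ j := by
      rw [Finset.sum_range_succ' (fun j => (-x) ^ j) (k + 1)]
      simp [add_comm]
    have hgeo := geom_sum_mul (-x) (k + 2)
    rw [hnil] at hgeo
    have h2 : (1 + ∑ j ∈ Finset.range (k + 1), (-x) ^ (j + 1)) * (1 + x)
        = -((∑ i ∈ Finset.range (k + 2), (-x) ^ i) * (-x - 1)) := by
      rw [hsum]; noncomm_ring
    rw [h2, hgeo]; norm_num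
  · have hxy : x + ∑ j ∈ Finset.range (k + 1), (-x) ^ (j + 1)
        = ∑ j ∈ Finset.range k, (-x) ^ (j + 2) := by
      rw [Finset.sum_range_succ' (fun j => (-x) ^ (j + 1)) k]
      simp
    rw [hxy]
    refine Submodule.sum_mem _ fun j _ => ?_
    refine sp_mono (fun n hn => ⟨hn.1, le_trans ?_ hn.2⟩) (hpow (j + 1))
    exact Nat.mul_le_mul_right m (by omega)


lemma deg_add (n n' : Fin r → ℕ) : (∑ i, (n + n') i) = (∑ i, n i) + ∑ i, n' i := by
  simp [Finset.sum_add_distrib]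

lemma two_factor (k : ℕ) (hbound : ∀ n : Fin r → ℕ, (∑ i, n i) > k → 𝒜 n = ⊥)
    (P Q : (Fin r → ℕ) → Prop)
    (hP : ∀ n m, P n → P m → P (n + m)) (hQ : ∀ n m, Q n → Q m → Q (n + m))
    (hPQ : ∀ n m, P n → Q m → P (n + m) ∨ Q (n + m)) :
    ∀ (j m : ℕ), 1 ≤ m → k + 1 ≤ m + j → ∀ e : A,
      e ∈ sp 𝒜 (fun n => (P n ∨ Q n) ∧ m ≤ ∑ i, n i) →
      ∃ a b : A, a ∈ sp 𝒜 P ∧ b ∈ sp 𝒜 Q ∧ 1 + e = (1 + a) * (1 + b) := by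
  intro j
  induction j with
  | zero =>
    intro m hm hkm e he
    have hb : sp 𝒜 (fun n => (P n ∨ Q n) ∧ m ≤ ∑ i, n i) = ⊥ :=
      sp_eq_bot fun n hn => hbound n (by omega)
    rw [hb, Submodule.mem_bot] at he
    exact ⟨0, 0, zero_mem _, zero_mem _, by simp [he]⟩
  | succ j ih =>
    intro m hm hkm e he
    obtain ⟨p, q, hp, hq, hepq⟩ := sp_split P _ he
    have hp' : p ∈ sp 𝒜 (fun n => P n ∧ m ≤ ∑ i, n i) :=
      sp_mono (fun n hn => ⟨hn.2, hn.1.2⟩) hp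
    have hq' : q ∈ sp 𝒜 (fun n => Q n ∧ m ≤ ∑ i, n i) :=
      sp_mono (fun n hn => ⟨hn.1.1.resolve_left hn.2, hn.1.2⟩) hq
    obtain ⟨p', hp'mem, hpp1, hpp2, hppsum⟩ := inv_lemma k hbound hP hm hp'
    obtain ⟨q', hq'mem, hqq1, hqq2, hqqsum⟩ := inv_lemma k hbound hQ hm hq'
    set f := (1 + p') * (1 + e) * (1 + q') - 1 with hfdef
    have hf1 : 1 + f = (1 + p') * (1 + e) * (1 + q') := by rw [hfdef]; abel
    have hfexp : f = (p + p') + (q + q')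
        + (p' * e + e * q' + (p' * q' + p' * e * q')) := by
      rw [hfdef, hepq]; noncomm_ring
    have hp'e : p' * e ∈ sp 𝒜 (fun n => (P n ∨ Q n) ∧ m + 1 ≤ ∑ i, n i) := by
      refine sp_mul ?_ hp'mem he
      rintro n n' ⟨hPn, hdn⟩ ⟨hPQ', hdn'⟩
      have hadd := deg_add n n'
      refine ⟨?_, by omega⟩
      rcases hPQ' with h | h
      · exact Or.inl (hP _ _ hPn h)
      · exact hPQ _ _ hPn h
    have heq' : e * q' ∈ sp 𝒜 (fun n => (P n ∨ Q n) ∧ m + 1 ≤ ∑ i, n i) := by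
      refine sp_mul ?_ he hq'mem
      rintro n n' ⟨hPQ', hdn⟩ ⟨hQn, hdn'⟩
      have hadd := deg_add n n'
      refine ⟨?_, by omega⟩
      rcases hPQ' with h | h
      · exact hPQ _ _ h hQn
      · exact Or.inr (hQ _ _ h hQn)
    have hp'q' : p' * q' ∈ sp 𝒜 (fun n => (P n ∨ Q n) ∧ m + 1 ≤ ∑ i, n i) := by
      refine sp_mul ?_ hp'mem hq'mem
      rintro n n' ⟨hPn, hdn⟩ ⟨hQn, hdn'⟩
      have hadd := deg_add n n'
      exact ⟨hPQ _ _ hPn hQn, by omega⟩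
    have hp'eq' : p' * e * q' ∈ sp 𝒜 (fun n => (P n ∨ Q n) ∧ m + 1 ≤ ∑ i, n i) := by
      refine sp_mul ?_ hp'e hq'mem
      rintro n n' ⟨hPQ', hdn⟩ ⟨hQn, hdn'⟩
      have hadd := deg_add n n'
      refine ⟨?_, by omega⟩
      rcases hPQ' with h | h
      · exact hPQ _ _ h hQn
      · exact Or.inr (hQ _ _ h hQn)
    have hCm1 : f ∈ sp 𝒜 (fun n => (P n ∨ Q n) ∧ m + 1 ≤ ∑ i, n i) := by
      rw [hfexp]
      refine add_mem (add_mem ?_ ?_) (add_mem (add_mem hp'e heq') (add_mem hp'q' hp'eq'))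
      · exact sp_mono (fun n hn => ⟨Or.inl hn.1, by omega⟩) hppsum
      · exact sp_mono (fun n hn => ⟨Or.inr hn.1, by omega⟩) hqqsum
    obtain ⟨a₀, b₀, ha₀, hb₀, hfab⟩ := ih (m + 1) (by omega) (by omega) f hCm1
    have hpP : p ∈ sp 𝒜 P := sp_mono (fun n hn => hn.2) hp
    have hqQ : q ∈ sp 𝒜 Q := sp_mono (fun n hn => hn.1) hq'
    refine ⟨p + a₀ + p * a₀, b₀ + q + b₀ * q, ?_, ?_, ?_⟩
    · exact add_mem (add_mem hpP ha₀) (sp_mul hP hpP ha₀)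
    · exact add_mem (add_mem hb₀ hqQ) (sp_mul hQ hb₀ hqQ)
    · have key : 1 + e = (1 + p) * (1 + f) * (1 + q) := by
        rw [hf1]
        calc 1 + e = 1 * (1 + e) * 1 := by noncomm_ring
          _ = ((1 + p) * (1 + p')) * (1 + e) * ((1 + q') * (1 + q)) := by rw [hpp1, hqq2]
          _ = (1 + p) * ((1 + p') * (1 + e) * (1 + q')) * (1 + q) := by noncomm_ring
      rw [key, hfab]
      noncomm_ring


lemma inv_simple (k : ℕ) (hbound : ∀ n : Fin r → ℕ, (∑ i, n i) > k → 𝒜 n = ⊥)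
    {P : (Fin r → ℕ) → Prop} (hP : ∀ n m, P n → P m → P (n + m))
    (hPd : ∀ n, P n → 1 ≤ ∑ i, n i) {x : A} (hx : x ∈ sp 𝒜 P) :
    ∃ y : A, y ∈ sp 𝒜 P ∧ (1 + x) * (1 + y) = 1 ∧ (1 + y) * (1 + x) = 1 := by
  have hco : sp 𝒜 P = sp 𝒜 (fun n => P n ∧ 1 ≤ ∑ i, n i) :=
    sp_congr fun n => ⟨fun h => ⟨h, hPd n h⟩, fun h => h.1⟩
  obtain ⟨y, hy, h1, h2, _⟩ := inv_lemma k hbound hP le_rfl (hco ▸ hx)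
  exact ⟨y, sp_mono (fun n hn => hn.1) hy, h1, h2⟩

end Aux

section Theta

lemma tp_add {r : ℕ} (θ : Fin r → ℝ) (n n' : Fin r → ℕ) :
    thetaPair' θ (n + n') = thetaPair' θ n + thetaPair' θ n' := by
  simp only [thetaPair', Pi.add_apply, Nat.cast_add, mul_add]
  rw [Finset.sum_add_distrib]

lemma tp_zero {r : ℕ} (θ : Fin r → ℝ) : thetaPair' θ (0 : Fin r → ℕ) = 0 := by
  simp [thetaPair']

lemma deg_one_le {r : ℕ} {n : Fin r → ℕ} (h : n ≠ 0) : 1 ≤ ∑ i, n i := by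
  by_contra hlt
  push_neg at hlt
  have h0 : ∑ i, n i = 0 := by omega
  exact h (funext fun i => Finset.sum_eq_zero_iff.mp h0 i (Finset.mem_univ i))

lemma tp_pos_ne {r : ℕ} {θ : Fin r → ℝ} {n : Fin r → ℕ} (h : 0 < thetaPair' θ n) : n ≠ 0 := by
  rintro rfl; rw [tp_zero] at h; exact lt_irrefl 0 h

lemma tp_neg_ne {r : ℕ} {θ : Fin r → ℝ} {n : Fin r → ℕ} (h : thetaPair' θ n < 0) : n ≠ 0 := by
  rintro rfl; rw [tp_zero] at h; exact lt_irrefl 0 h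

lemma pi_add_ne_zero {r : ℕ} {n m : Fin r → ℕ} (h : n ≠ 0) : n + m ≠ 0 := by
  intro h0
  have h1 := deg_one_le h
  have h2 : (1 : ℕ) ≤ ∑ i, (n + m) i := by
    rw [deg_add]; omega
  rw [h0] at h2
  simp at h2

end Theta

section Main

set_option linter.unusedSectionVars false

variable {r : ℕ} {A : Type*} [Ring A] [Algebra ℂ A]
variable {𝒜 : (Fin r → ℕ) → Submodule ℂ A} [GradedAlgebra 𝒜]

lemma uniq_triple (k : ℕ) (hbound : ∀ n : Fin r → ℕ, (∑ i, n i) > k → 𝒜 n = ⊥)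
    (θ : Fin r → ℝ) {a z c a' z' c' : A}
    (ha : a ∈ sp 𝒜 fun n => 0 < thetaPair' θ n)
    (hz : z ∈ sp 𝒜 fun n => n ≠ 0 ∧ thetaPair' θ n = 0)
    (hc : c ∈ sp 𝒜 fun n => thetaPair' θ n < 0)
    (ha' : a' ∈ sp 𝒜 fun n => 0 < thetaPair' θ n)
    (hz' : z' ∈ sp 𝒜 fun n => n ≠ 0 ∧ thetaPair' θ n = 0)
    (hc' : c' ∈ sp 𝒜 fun n => thetaPair' θ n < 0)
    (heq : (1 + a) * (1 + z) * (1 + c) = (1 + a') * (1 + z') * (1 + c')) :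
    a = a' ∧ z = z' ∧ c = c' := by
  have hPpc : ∀ n m : Fin r → ℕ, 0 < thetaPair' θ n → 0 < thetaPair' θ m →
      0 < thetaPair' θ (n + m) := fun n m h1 h2 => by rw [tp_add]; exact add_pos h1 h2
  have hPzc : ∀ n m : Fin r → ℕ, (n ≠ 0 ∧ thetaPair' θ n = 0) → (m ≠ 0 ∧ thetaPair' θ m = 0) →
      ((n + m) ≠ 0 ∧ thetaPair' θ (n + m) = 0) := fun n m h1 h2 =>
    ⟨pi_add_ne_zero h1.1, by rw [tp_add, h1.2, h2.2, add_zero]⟩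
  have hPmc : ∀ n m : Fin r → ℕ, thetaPair' θ n < 0 → thetaPair' θ m < 0 →
      thetaPair' θ (n + m) < 0 := fun n m h1 h2 => by rw [tp_add]; exact add_neg h1 h2
  obtain ⟨a'', ha''m, ha''1, ha''2⟩ := inv_simple k hbound hPpc
    (fun n hn => deg_one_le (tp_pos_ne hn)) ha'
  obtain ⟨c'', hc''m, hc''1, hc''2⟩ := inv_simple k hbound hPmc
    (fun n hn => deg_one_le (tp_neg_ne hn)) hc
  obtain ⟨z'', hz''m, hz''1, hz''2⟩ := inv_simple k hbound hPzc
    (fun n hn => deg_one_le hn.1) hz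
  obtain ⟨α, hαdef⟩ : ∃ t : A, t = a'' + a + a'' * a := ⟨_, rfl⟩
  obtain ⟨γ, hγdef⟩ : ∃ t : A, t = c' + c'' + c' * c'' := ⟨_, rfl⟩
  have hα1 : (1 + a'') * (1 + a) = 1 + α := by rw [hαdef]; noncomm_ring
  have hγ1 : (1 + c') * (1 + c'') = 1 + γ := by rw [hγdef]; noncomm_ring
  have hαm : α ∈ sp 𝒜 (fun n => 0 < thetaPair' θ n) := by
    rw [hαdef]; exact add_mem (add_mem ha''m ha) (sp_mul hPpc ha''m ha)
  have hγm : γ ∈ sp 𝒜 (fun n => thetaPair' θ n < 0) := by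
    rw [hγdef]; exact add_mem (add_mem hc' hc''m) (sp_mul hPmc hc' hc''m)
  have e1 : (1 + a'') * ((1 + a) * (1 + z) * (1 + c)) * (1 + c'') = (1 + α) * (1 + z) := by
    calc (1 + a'') * ((1 + a) * (1 + z) * (1 + c)) * (1 + c'')
        = ((1 + a'') * (1 + a)) * (1 + z) * ((1 + c) * (1 + c'')) := by noncomm_ring
      _ = ((1 + a'') * (1 + a)) * (1 + z) * 1 := by rw [hc''1]
      _ = (1 + α) * (1 + z) := by rw [hα1, mul_one]
  have e2 : (1 + a'') * ((1 + a') * (1 + z') * (1 + c')) * (1 + c'') = (1 + z') * (1 + γ) := by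
    calc (1 + a'') * ((1 + a') * (1 + z') * (1 + c')) * (1 + c'')
        = ((1 + a'') * (1 + a')) * (1 + z') * ((1 + c') * (1 + c'')) := by noncomm_ring
      _ = 1 * (1 + z') * ((1 + c') * (1 + c'')) := by rw [ha''2]
      _ = (1 + z') * (1 + γ) := by rw [hγ1, one_mul]
  have E : (1 + α) * (1 + z) = (1 + z') * (1 + γ) := by rw [← e1, ← e2, heq]
  have E' : α + z + α * z = z' + γ + z' * γ := by
    have l : (1 + α) * (1 + z) = 1 + (α + z + α * z) := by noncomm_ring
    have rr : (1 + z') * (1 + γ) = 1 + (z' + γ + z' * γ) := by noncomm_ring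
    rw [l, rr] at E
    exact add_left_cancel E
  have hsub : z - z' = γ + z' * γ - α - α * z := by
    have h3 : (α + z + α * z) - (z' + γ + z' * γ) = 0 := by rw [E']; abel
    have h4 : z - z' - (γ + z' * γ - α - α * z) = (α + z + α * z) - (z' + γ + z' * γ) := by
      abel
    rw [h3] at h4
    exact sub_eq_zero.mp h4
  have hzz' : z = z' := by
    have hmem1 : z - z' ∈ sp 𝒜 (fun n => thetaPair' θ n = 0) :=
      sub_mem (sp_mono (fun n hn => hn.2) hz) (sp_mono (fun n hn => hn.2) hz')
    have hmem2 : z - z' ∈ sp 𝒜 (fun n => thetaPair' θ n ≠ 0) := by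
      rw [hsub]
      refine sub_mem (sub_mem (add_mem ?_ ?_) ?_) ?_
      · exact sp_mono (fun n hn => ne_of_lt hn) hγm
      · refine sp_mul ?_ hz' hγm
        rintro n m ⟨_, h0⟩ hm
        rw [tp_add, h0, zero_add]
        exact ne_of_lt hm
      · exact sp_mono (fun n hn => ne_of_gt hn) hαm
      · refine sp_mul ?_ hαm hz
        rintro n m hn ⟨_, h0⟩
        rw [tp_add, h0, add_zero]
        exact ne_of_gt hn
    have := sp_disjoint (fun n h1 h2 => h2 h1) hmem1 hmem2
    exact sub_eq_zero.mp this
  have E'' : α + α * z = γ + z * γ := by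
    rw [← hzz'] at E'
    calc α + α * z = (α + z + α * z) - z := by abel
      _ = (z + γ + z * γ) - z := by rw [E']
      _ = γ + z * γ := by abel
  have hδ0 : α + α * z = 0 := by
    have hm1 : α + α * z ∈ sp 𝒜 (fun n => 0 < thetaPair' θ n) := by
      refine add_mem hαm (sp_mul ?_ hαm hz)
      rintro n m hn ⟨_, h0⟩
      rw [tp_add, h0, add_zero]; exact hn
    have hm2 : α + α * z ∈ sp 𝒜 (fun n => thetaPair' θ n < 0) := by
      rw [E'']
      refine add_mem hγm (sp_mul ?_ hz hγm)
      rintro n m ⟨_, h0⟩ hm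
      rw [tp_add, h0, zero_add]; exact hm
    exact sp_disjoint (fun n h1 h2 => absurd h1 (not_lt.mpr h2.le)) hm1 hm2
  have hα0 : α = 0 := by
    have hmul : α * (1 + z) = 0 := by
      rw [mul_add, mul_one]; exact hδ0
    have : α = α * ((1 + z) * (1 + z'')) := by rw [hz''1, mul_one]
    rw [this, ← mul_assoc, hmul, zero_mul]
  have hγ0 : γ = 0 := by
    have hmul : (1 + z) * γ = 0 := by
      rw [add_mul, one_mul]
      rw [E''] at hδ0; exact hδ0
    have : γ = ((1 + z'') * (1 + z)) * γ := by rw [hz''2, one_mul]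
    rw [this, mul_assoc, hmul, mul_zero]
  have haa' : a = a' := by
    have h1a : (1 + a'') * (1 + a) = 1 := by rw [hα1, hα0, add_zero]
    have : (1 + a') * ((1 + a'') * (1 + a)) = (1 + a') * 1 := by rw [h1a]
    rw [← mul_assoc, ha''1, one_mul, mul_one] at this
    exact add_left_cancel this
  have hcc' : c = c' := by
    have h1c : (1 + c') * (1 + c'') = 1 := by rw [hγ1, hγ0, add_zero]
    have : (1 + c') * ((1 + c'') * (1 + c)) = 1 * (1 + c) := by
      rw [← mul_assoc, h1c, one_mul]
    rw [hc''2, mul_one, one_mul] at this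
    exact (add_left_cancel this).symm
  exact ⟨haa', hzz', hcc'⟩

end Main

theorem unique_theta_factorization
    (r k : ℕ) (A : Type*) [Ring A] [Algebra ℂ A]
    (𝒜 : (Fin r → ℕ) → Submodule ℂ A) [GradedAlgebra 𝒜]
    (hbound : ∀ n : Fin r → ℕ, (∑ i, n i) > k → 𝒜 n = ⊥)
    (θ : Fin r → ℝ)
    (Apos Aplus Azero Aminus : Submodule ℂ A)
    (hpos : Apos = ⨆ (n : Fin r → ℕ) (_ : n ≠ 0), 𝒜 n)
    (hplus : Aplus = ⨆ (n : Fin r → ℕ) (_ : 0 < thetaPair' θ n), 𝒜 n)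
    (hzero : Azero = ⨆ (n : Fin r → ℕ) (_ : n ≠ 0 ∧ thetaPair' θ n = 0), 𝒜 n)
    (hminus : Aminus = ⨆ (n : Fin r → ℕ) (_ : thetaPair' θ n < 0), 𝒜 n) :
    ∀ g : A, g - 1 ∈ Apos →
      ∃! t : A × A × A,
        t.1 - 1 ∈ Aplus ∧ t.2.1 - 1 ∈ Azero ∧ t.2.2 - 1 ∈ Aminus ∧
        g = t.1 * t.2.1 * t.2.2 := by
  intro g hg
  classical
  have hApos : Apos = sp 𝒜 (fun n => n ≠ 0) := hpos
  have hAplus : Aplus = sp 𝒜 (fun n => 0 < thetaPair' θ n) := hplus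
  have hAzero : Azero = sp 𝒜 (fun n => n ≠ 0 ∧ thetaPair' θ n = 0) := hzero
  have hAminus : Aminus = sp 𝒜 (fun n => thetaPair' θ n < 0) := hminus
  have hPpc : ∀ n m : Fin r → ℕ, 0 < thetaPair' θ n → 0 < thetaPair' θ m →
      0 < thetaPair' θ (n + m) := fun n m h1 h2 => by rw [tp_add]; exact add_pos h1 h2
  have hPqc : ∀ n m : Fin r → ℕ, (n ≠ 0 ∧ thetaPair' θ n ≤ 0) → (m ≠ 0 ∧ thetaPair' θ m ≤ 0) →
      ((n + m) ≠ 0 ∧ thetaPair' θ (n + m) ≤ 0) := fun n m h1 h2 =>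
    ⟨pi_add_ne_zero h1.1, by rw [tp_add]; exact add_nonpos h1.2 h2.2⟩
  have hPQ1 : ∀ n m : Fin r → ℕ, 0 < thetaPair' θ n → (m ≠ 0 ∧ thetaPair' θ m ≤ 0) →
      (0 < thetaPair' θ (n + m)) ∨ ((n + m) ≠ 0 ∧ thetaPair' θ (n + m) ≤ 0) := by
    intro n m h1 h2
    rcases le_or_gt (thetaPair' θ (n + m)) 0 with h | h
    · exact Or.inr ⟨pi_add_ne_zero (tp_pos_ne h1), h⟩
    · exact Or.inl h
  have he' : g - 1 ∈ sp 𝒜 (fun n =>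
      ((0 < thetaPair' θ n) ∨ (n ≠ 0 ∧ thetaPair' θ n ≤ 0)) ∧ 1 ≤ ∑ i, n i) := by
    rw [hApos] at hg
    refine sp_mono (fun n hn => ⟨?_, deg_one_le hn⟩) hg
    rcases le_or_gt (thetaPair' θ n) 0 with h | h
    · exact Or.inr ⟨hn, h⟩
    · exact Or.inl h
  obtain ⟨a, b, haA, hbB, hab⟩ :=
    two_factor k hbound _ _ hPpc hPqc hPQ1 k 1 le_rfl (by omega) (g - 1) he'
  have hPzc : ∀ n m : Fin r → ℕ, (n ≠ 0 ∧ thetaPair' θ n = 0) → (m ≠ 0 ∧ thetaPair' θ m = 0) →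
      ((n + m) ≠ 0 ∧ thetaPair' θ (n + m) = 0) := fun n m h1 h2 =>
    ⟨pi_add_ne_zero h1.1, by rw [tp_add, h1.2, h2.2, add_zero]⟩
  have hPmc : ∀ n m : Fin r → ℕ, thetaPair' θ n < 0 → thetaPair' θ m < 0 →
      thetaPair' θ (n + m) < 0 := fun n m h1 h2 => by rw [tp_add]; exact add_neg h1 h2
  have hPzm : ∀ n m : Fin r → ℕ, (n ≠ 0 ∧ thetaPair' θ n = 0) → thetaPair' θ m < 0 →
      ((n + m) ≠ 0 ∧ thetaPair' θ (n + m) = 0) ∨ thetaPair' θ (n + m) < 0 := by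
    intro n m h1 h2
    refine Or.inr ?_
    rw [tp_add, h1.2, zero_add]
    exact h2
  have hb' : b ∈ sp 𝒜 (fun n =>
      ((n ≠ 0 ∧ thetaPair' θ n = 0) ∨ thetaPair' θ n < 0) ∧ 1 ≤ ∑ i, n i) := by
    refine sp_mono (fun n hn => ⟨?_, deg_one_le hn.1⟩) hbB
    rcases lt_or_eq_of_le hn.2 with h | h
    · exact Or.inr h
    · exact Or.inl ⟨hn.1, h⟩
  obtain ⟨z, c, hzZ, hcC, hzc⟩ :=
    two_factor k hbound _ _ hPzc hPmc hPzm k 1 le_rfl (by omega) b hb'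
  have hgdecomp : g = (1 + a) * (1 + z) * (1 + c) := by
    have h1 : g = 1 + (g - 1) := by abel
    rw [mul_assoc, ← hzc, ← hab, ← h1]
  refine ⟨(1 + a, 1 + z, 1 + c), ⟨?_, ?_, ?_, hgdecomp⟩, ?_⟩
  · rw [hAplus]; simpa using haA
  · rw [hAzero]; simpa using hzZ
  · rw [hAminus]; simpa using hcC
  · rintro ⟨u, v, w⟩ ⟨hu, hv, hw, hguvw⟩
    have hueq : u = 1 + (u - 1) := by abel
    have hveq : v = 1 + (v - 1) := by abel
    have hweq : w = 1 + (w - 1) := by abel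
    have heq2 : (1 + (u - 1)) * (1 + (v - 1)) * (1 + (w - 1)) = (1 + a) * (1 + z) * (1 + c) := by
      rw [← hueq, ← hveq, ← hweq, ← hguvw, hgdecomp]
    obtain ⟨h1, h2, h3⟩ := uniq_triple k hbound θ
      (hAplus ▸ hu) (hAzero ▸ hv) (hAminus ▸ hw) haA hzZ hcC heq2
    have hu2 : u = 1 + a := by rw [← h1]; abel
    have hv2 : v = 1 + z := by rw [← h2]; abel
    have hw2 : w = 1 + c := by rw [← h3]; abel
    simp only [Prod.mk.injEq]
    exact ⟨hu2, hv2, hw2⟩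
end

section
/- Let Q be an acyclic quiver with skew-symmetrized form ⟨e_i, e_j⟩ = a_{ji} - a_{ij}, where a_{ij} is the number of arrows from i to j. Then the only self-stable representations of Q are the vertex simples S_i. That is, if E is a nonzero finite-dimensional representation such that for every non-trivial short exact sequence 0 → A → E → B → 0 one has ⟨[A],[B]⟩ < 0, then E ≅ S_i for some vertex i. -/
/- STATEMENT 16: for an acyclic quiver Q, the only self-stable representations
are the vertex simples S_i.  Representations of Q are formalized as functors
from the path category Paths Q to ModuleCat ℂ (finite-dimensional at every
vertex); the skew-symmetrized Euler form is ⟨e_i,e_j⟩ = a_{ji} - a_{ij}.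
A representation with dimension vector e_i is exactly S_i, so the conclusion
is stated as: the dimension vector of E is a standard basis vector. -/

open CategoryTheory CategoryTheory.Limits

/-- The skew-symmetrized form ⟨a,b⟩ = Σ_{i,j} (a_{ji} - a_{ij}) a_i b_j. -/
def skewEulerForm {V : Type} [Quiver.{1} V] [Fintype V]
    [∀ i j : V, Fintype (i ⟶ j)] (a b : V → ℕ) : ℤ :=
  ∑ i : V, ∑ j : V,
    ((Fintype.card (j ⟶ i) : ℤ) - (Fintype.card (i ⟶ j) : ℤ)) * (a i : ℤ) * (b j : ℤ)

/-- The dimension vector of a representation (a functor on the path category). -/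
noncomputable def dimVec {V : Type} [Quiver.{1} V]
    (E : Paths V ⥤ ModuleCat ℂ) (i : V) : ℕ :=
  Module.finrank ℂ (E.obj ((Paths.of V).obj i))

section Aux

/-- Nonnegativity of the skew form when there are no arrows from the support
of `a` to the support of `b`. -/
lemma skewEulerForm_nonneg {V : Type} [Quiver.{1} V] [Fintype V]
    [∀ i j : V, Fintype (i ⟶ j)] (a b : V → ℕ)
    (h : ∀ i j : V, a i ≠ 0 → b j ≠ 0 → Fintype.card (i ⟶ j) = 0) :
    0 ≤ skewEulerForm a b := by
  unfold skewEulerForm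
  refine Finset.sum_nonneg fun i _ => Finset.sum_nonneg fun j _ => ?_
  by_cases hai : a i = 0
  · simp [hai]
  by_cases hbj : b j = 0
  · simp [hbj]
  simp only [h i j hai hbj, Nat.cast_zero, sub_zero]
  positivity

/-- The skew form vanishes when both vectors are supported at a single vertex. -/
lemma skewEulerForm_eq_zero {V : Type} [Quiver.{1} V] [Fintype V]
    [∀ i j : V, Fintype (i ⟶ j)] (a b : V → ℕ) (i : V)
    (ha : ∀ j, j ≠ i → a j = 0) (hb : ∀ j, j ≠ i → b j = 0) :
    skewEulerForm a b = 0 := by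
  unfold skewEulerForm
  refine Finset.sum_eq_zero fun k _ => Finset.sum_eq_zero fun l _ => ?_
  by_cases hk : k = i
  · by_cases hl : l = i
    · subst hk; subst hl; simp
    · simp [hb l hl]
  · simp [ha k hk]

universe u

/-- A zero object of `ModuleCat` is subsingleton. -/
lemma subsingleton_of_moduleCat_isZero {M : ModuleCat.{u} ℂ} (h : IsZero M) :
    Subsingleton M := by
  have e : M ≅ ModuleCat.of ℂ PUnit :=
    h.iso (ModuleCat.isZero_of_subsingleton (ModuleCat.of ℂ PUnit))
  exact e.toLinearEquiv.toEquiv.subsingleton_congr.2 inferInstance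

variable {V : Type} [Quiver.{1} V]

/-- The quotient of a representation by a family of submodules closed under
the structure maps. -/
noncomputable def quotFunctor (E : Paths V ⥤ ModuleCat.{u} ℂ)
    (U : ∀ v : Paths V, Submodule ℂ (E.obj v))
    (hU : ∀ {v w : Paths V} (p : v ⟶ w), U v ≤ (U w).comap (E.map p).hom) :
    Paths V ⥤ ModuleCat.{u} ℂ where
  obj v := ModuleCat.of ℂ ((E.obj v) ⧸ U v)
  map {v w} p := ModuleCat.ofHom (Submodule.mapQ _ _ (E.map p).hom (hU p))
  map_id v := by
    apply ModuleCat.hom_ext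
    apply Submodule.linearMap_qext
    ext x
    show Submodule.Quotient.mk ((E.map (𝟙 v)).hom x) = Submodule.Quotient.mk x
    rw [E.map_id]
    rfl
  map_comp {u v w} p q := by
    apply ModuleCat.hom_ext
    apply Submodule.linearMap_qext
    ext x
    show Submodule.Quotient.mk ((E.map (p ≫ q)).hom x)
      = Submodule.Quotient.mk ((E.map q).hom ((E.map p).hom x))
    rw [E.map_comp]
    rfl

/-- The quotient natural transformation. -/
noncomputable def quotTrans (E : Paths V ⥤ ModuleCat.{u} ℂ)
    (U : ∀ v : Paths V, Submodule ℂ (E.obj v))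
    (hU : ∀ {v w : Paths V} (p : v ⟶ w), U v ≤ (U w).comap (E.map p).hom) :
    E ⟶ quotFunctor E U hU where
  app v := ModuleCat.ofHom (U v).mkQ
  naturality _ _ _ := rfl

/-- The key consequence of self-stability: for every compatible family of
submodules which is somewhere nonzero and somewhere proper, the skew Euler
form of (dim of submodules, dim of quotients) is negative. -/
lemma stable_lt {V : Type} [Quiver.{1} V] [Fintype V] [DecidableEq V]
    [∀ i j : V, Fintype (i ⟶ j)]
    (E : Paths V ⥤ ModuleCat.{u} ℂ)
    (hstable : ∀ (A B : Paths V ⥤ ModuleCat.{u} ℂ) (f : A ⟶ E) (g : E ⟶ B)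
      (w : f ≫ g = 0), (ShortComplex.mk f g w).ShortExact →
      ¬ IsZero A → ¬ IsZero B → skewEulerForm (dimVec A) (dimVec B) < 0)
    (U : ∀ v : Paths V, Submodule ℂ (E.obj v))
    (hU : ∀ {v w : Paths V} (p : v ⟶ w), U v ≤ (U w).comap (E.map p).hom)
    (hA : ∃ v : V, Module.finrank ℂ (U ((Paths.of V).obj v)) ≠ 0)
    (hB : ∃ v : V, U ((Paths.of V).obj v) ≠ ⊤) :
    skewEulerForm (fun v => Module.finrank ℂ (U ((Paths.of V).obj v)))
      (fun v => Module.finrank ℂ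
        (E.obj ((Paths.of V).obj v) ⧸ U ((Paths.of V).obj v))) < 0 := by
  classical
  set B := quotFunctor E U hU with hBdef
  set g := quotTrans E U hU with hgdef
  haveI : ∀ v, Epi (g.app v) := fun v =>
    (ModuleCat.epi_iff_surjective _).2 (Submodule.mkQ_surjective _)
  haveI hepi : Epi g := NatTrans.epi_of_epi_app g
  set A := kernel g with hAdef
  set f : A ⟶ E := kernel.ι g with hfdef
  have w : f ≫ g = 0 := kernel.condition g
  have hexact : (ShortComplex.mk f g w).Exact :=
    ShortComplex.exact_of_f_is_kernel _ (kernelIsKernel g)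
  have hses : (ShortComplex.mk f g w).ShortExact := { exact := hexact }
  have hAdim : ∀ v : Paths V,
      Module.finrank ℂ (A.obj v) = Module.finrank ℂ (U v) := by
    intro v
    have e1 : A.obj v ≅ kernel (g.app v) :=
      PreservesKernel.iso ((evaluation (Paths V) (ModuleCat.{u} ℂ)).obj v) g
    have e2 : kernel (g.app v) ≅ ModuleCat.of ℂ (LinearMap.ker (g.app v).hom) :=
      ModuleCat.kernelIsoKer (g.app v)
    have e : A.obj v ≃ₗ[ℂ] LinearMap.ker (g.app v).hom := (e1 ≪≫ e2).toLinearEquiv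
    rw [e.finrank_eq]
    have hk : LinearMap.ker (g.app v).hom = U v := Submodule.ker_mkQ (U v)
    rw [hk]
  have hAnz : ¬ IsZero A := by
    obtain ⟨v, hv⟩ := hA
    intro h
    have hz := (Functor.isZero_iff A).1 h ((Paths.of V).obj v)
    haveI := subsingleton_of_moduleCat_isZero hz
    apply hv
    rw [← hAdim]
    exact Module.finrank_zero_of_subsingleton
  have hBnz : ¬ IsZero B := by
    obtain ⟨v, hv⟩ := hB
    intro h
    have hz := (Functor.isZero_iff B).1 h ((Paths.of V).obj v)
    haveI : Subsingleton (E.obj ((Paths.of V).obj v) ⧸ U ((Paths.of V).obj v)) :=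
      subsingleton_of_moduleCat_isZero hz
    exact hv (Submodule.Quotient.subsingleton_iff.mp ‹_›)
  have hlt := hstable A B f g w hses hAnz hBnz
  have ha : dimVec A = fun v => Module.finrank ℂ (U ((Paths.of V).obj v)) :=
    funext fun v => hAdim ((Paths.of V).obj v)
  have hb : dimVec B = fun v => Module.finrank ℂ
      (E.obj ((Paths.of V).obj v) ⧸ U ((Paths.of V).obj v)) :=
    funext fun v => rfl
  rwa [ha, hb] at hlt

end Aux

theorem selfstable_implies_vertex_simple
    {V : Type} [Quiver.{1} V] [Fintype V] [DecidableEq V]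
    [∀ i j : V, Fintype (i ⟶ j)]
    -- Q is acyclic: there are no oriented cycles.
    (hacyclic : ∀ (i : V) (p : Quiver.Path i i), p.length = 0)
    (E : Paths V ⥤ ModuleCat ℂ)
    (hfd : ∀ i : V, FiniteDimensional ℂ (E.obj ((Paths.of V).obj i)))
    (hE : ¬ IsZero E)
    -- E is self-stable: ⟨[A],[B]⟩ < 0 for every non-trivial SES 0 → A → E → B → 0.
    (hstable : ∀ (A B : Paths V ⥤ ModuleCat ℂ) (f : A ⟶ E) (g : E ⟶ B)
      (w : f ≫ g = 0), (ShortComplex.mk f g w).ShortExact →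
      ¬ IsZero A → ¬ IsZero B → skewEulerForm (dimVec A) (dimVec B) < 0) :
    ∃ i : V, ∀ j : V, dimVec E j = if j = i then 1 else 0 := by
  classical
  haveI hfd' : ∀ v : Paths V, FiniteDimensional ℂ (E.obj v) := fun v => hfd v
  -- the support of E is nonempty
  have hsupp : ∃ i : V, dimVec E i ≠ 0 := by
    by_contra h
    push_neg at h
    apply hE
    rw [Functor.isZero_iff]
    intro v
    haveI : Subsingleton (E.obj v) := Module.finrank_zero_iff.mp (show Module.finrank ℂ (E.obj v) = 0 from h v)
    exact ModuleCat.isZero_of_subsingleton _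
  -- main stability consequence for predicates closed under arrows
  have main : ∀ (P : V → Prop), (∀ ⦃a b : V⦄, (a ⟶ b) → P a → P b) →
      (∃ i, P i ∧ dimVec E i ≠ 0) → (∃ j, ¬ P j ∧ dimVec E j ≠ 0) → False := by
    rintro P hP ⟨i, hPi, hi⟩ ⟨j, hPj, hj⟩
    set U : ∀ v : Paths V, Submodule ℂ (E.obj v) :=
      fun v => if P v then ⊤ else ⊥ with hUdef
    have hreach : ∀ {v w : Paths V} (p : v ⟶ w), P v → P w := by
      intro v w p
      exact Paths.induction_fixed_source (P := fun {b} _ => P v → P b) id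
        (fun _ e ih h => hP e (ih h)) p
    have hU : ∀ {v w : Paths V} (p : v ⟶ w), U v ≤ (U w).comap (E.map p).hom := by
      intro v w p
      by_cases hv : P v
      · have hw := hreach p hv
        simp [hUdef, hv, hw]
      · simp [hUdef, hv]
    have hlt := stable_lt E hstable U hU ⟨i, ?_⟩ ⟨j, ?_⟩
    · -- contradiction with nonnegativity
      have hge := skewEulerForm_nonneg
        (fun v => Module.finrank ℂ (U ((Paths.of V).obj v)))
        (fun v => Module.finrank ℂ
          (E.obj ((Paths.of V).obj v) ⧸ U ((Paths.of V).obj v))) ?_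
      · linarith
      · intro k l hk hl
        have hPk : P k := by
          by_contra hc
          apply hk
          simp [hUdef, hc]
        have hPl : ¬ P l := by
          intro hc
          apply hl
          have : U ((Paths.of V).obj l) = ⊤ := by simp [hUdef, hc]
          haveI : Subsingleton (E.obj ((Paths.of V).obj l) ⧸ U ((Paths.of V).obj l)) :=
            Submodule.Quotient.subsingleton_iff.mpr this
          exact Module.finrank_zero_of_subsingleton
        by_contra hc
        have : Nonempty (k ⟶ l) := Fintype.card_pos_iff.mp (Nat.pos_of_ne_zero hc)
        obtain ⟨e⟩ := this
        exact hPl (hP e hPk)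
    · -- U is nonzero at i
      have : U ((Paths.of V).obj i) = ⊤ := by simp [hUdef, hPi]
      rw [this]
      rw [finrank_top]
      exact hi
    · -- U is proper at j
      have hbot : U ((Paths.of V).obj j) = ⊥ := by simp [hUdef, hPj]
      rw [hbot]
      haveI : Nontrivial (E.obj ((Paths.of V).obj j)) :=
        Module.finrank_pos_iff.mp (Nat.pos_of_ne_zero hj)
      exact bot_ne_top
  obtain ⟨i₀, hi₀⟩ := hsupp
  -- no positive-length path between support vertices
  have noPos : ∀ i j : V, dimVec E i ≠ 0 → dimVec E j ≠ 0 →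
      ∀ p : Quiver.Path i j, p.length = 0 := by
    intro i j hi hj p
    by_contra hp
    refine main (fun v => ∃ q : Quiver.Path i v,
      q.length ≠ 0) ?_ ⟨j, ⟨p, hp⟩, hj⟩ ⟨i, ?_, hi⟩
    · rintro a b e ⟨q, hq⟩
      exact ⟨q.cons e, by simp⟩
    · rintro ⟨q, hq⟩
      exact hq (hacyclic i q)
  -- the support is exactly {i₀}
  have huniq : ∀ j : V, dimVec E j ≠ 0 → j = i₀ := by
    intro j hj
    by_contra hne
    by_cases hij : Nonempty (Quiver.Path i₀ j)
    · obtain ⟨p⟩ := hij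
      have h0 := noPos i₀ j hi₀ hj p
      exact hne (Quiver.Path.eq_of_length_zero p h0).symm
    · refine main (fun v => Nonempty (Quiver.Path j v))
        ?_ ⟨j, ⟨Quiver.Path.nil⟩, hj⟩ ⟨i₀, ?_, hi₀⟩
      · rintro a b e ⟨q⟩
        exact ⟨q.cons e⟩
      · rintro ⟨q⟩
        have h0 := noPos j i₀ hj hi₀ q
        exact hne (Quiver.Path.eq_of_length_zero q h0)
  -- dimension at i₀ is 1
  have hd : dimVec E i₀ = 1 := by
    by_contra h1
    have h2 : 2 ≤ dimVec E i₀ := by omega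
    haveI : Nontrivial (E.obj ((Paths.of V).obj i₀)) :=
      Module.finrank_pos_iff.mp (Nat.pos_of_ne_zero hi₀)
    obtain ⟨x, hx⟩ := exists_ne (0 : E.obj ((Paths.of V).obj i₀))
    set W : Submodule ℂ (E.obj ((Paths.of V).obj i₀)) := Submodule.span ℂ {x} with hWdef
    have hW : Module.finrank ℂ W = 1 := finrank_span_singleton hx
    set U : ∀ v : Paths V, Submodule ℂ (E.obj v) :=
      fun v => if h : v = (Paths.of V).obj i₀ then W.comap (E.map (eqToHom h)).hom else ⊥
      with hUdef
    have hUi : U ((Paths.of V).obj i₀) = W := by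
      rw [hUdef]
      show (if h : ((Paths.of V).obj i₀ : Paths V) = (Paths.of V).obj i₀ then
        Submodule.comap (E.map (eqToHom h)).hom W else ⊥) = W
      rw [dif_pos rfl, eqToHom_refl, E.map_id, ModuleCat.hom_id]
      exact Submodule.comap_id W
    have hU : ∀ {v w : Paths V} (p : v ⟶ w), U v ≤ (U w).comap (E.map p).hom := by
      intro v w p
      by_cases hv : (Paths.of V).obj i₀ = v
      · subst hv
        by_cases hw : (Paths.of V).obj i₀ = w
        · subst hw
          have h0 : p.length = 0 := hacyclic i₀ p
          have hnil : p = Quiver.Path.nil := Quiver.Path.eq_nil_of_length_zero p h0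
          have hmap : E.map p = 𝟙 (E.obj ((Paths.of V).obj i₀)) := by
            rw [hnil]; exact E.map_id _
          rw [hmap]
          intro y hy
          exact hy
        · -- target is outside the support
          intro y hy
          haveI hsub : Subsingleton (E.obj w) := by
            have h0 : dimVec E w = 0 := by
              by_contra hc
              exact hw (huniq w hc).symm
            haveI := hfd' w
            exact Module.finrank_zero_iff.mp (show Module.finrank ℂ (E.obj w) = 0 from h0)
          have hUw : U w = ⊥ := by
            simp only [hUdef]
            exact dif_neg (fun h => hw h.symm)
          simp only [Submodule.mem_comap, hUw, Submodule.mem_bot]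
          exact Subsingleton.elim _ _
      · have hUv : U v = ⊥ := by
          simp only [hUdef]
          exact dif_neg (fun h => hv h.symm)
        rw [hUv]
        exact bot_le
    have hlt := stable_lt E hstable U hU ⟨i₀, ?_⟩ ⟨i₀, ?_⟩
    · have hz := skewEulerForm_eq_zero
        (fun v => Module.finrank ℂ (U ((Paths.of V).obj v)))
        (fun v => Module.finrank ℂ
          (E.obj ((Paths.of V).obj v) ⧸ U ((Paths.of V).obj v))) i₀ ?_ ?_
      · linarith
      · intro j hj
        have hUj : U ((Paths.of V).obj j) = ⊥ := by
          simp only [hUdef]; exact dif_neg (fun h => hj h)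
        show Module.finrank ℂ (U ((Paths.of V).obj j)) = 0
        rw [hUj]
        exact finrank_bot ℂ _
      · intro j hj
        have h0 : dimVec E j = 0 := by
          by_contra hc
          exact hj (huniq j hc)
        haveI : Subsingleton (E.obj ((Paths.of V).obj j)) :=
          Module.finrank_zero_iff.mp h0
        haveI : Subsingleton
            (E.obj ((Paths.of V).obj j) ⧸ U ((Paths.of V).obj j)) :=
          (Submodule.mkQ_surjective _).subsingleton
        exact Module.finrank_zero_of_subsingleton
    · show Module.finrank ℂ (U ((Paths.of V).obj i₀)) ≠ 0
      rw [hUi, hW]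
      exact one_ne_zero
    · rw [hUi]
      intro hc
      have : Module.finrank ℂ (E.obj ((Paths.of V).obj i₀)) = 1 := by
        rw [← hW, hc, finrank_top]
      have hdd : dimVec E i₀ = 1 := this
      omega
  refine ⟨i₀, fun j => ?_⟩
  by_cases hji : j = i₀
  · subst hji
    simp [hd]
  · rw [if_neg hji]
    by_contra hc
    exact hji (huniq j hc)
end

section
/- Let A be the category of representations of a quiver with relations, θ ∈ M_R, and m ∈ M^⊕ with corresponding projective P = P(m). Given a framed representation ν : P → E with E ∈ F(θ), there exists a unique short exact sequence 0 → A → E → B → 0 with A, B ∈ F(θ), the composite P → E → B zero, and coker(P → A) ∈ T(θ). Moreover B is the torsion-free part (with respect to (T(θ),F(θ))) of coker(ν). -/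
/- STATEMENT 17: given a framed object ν : P → E with E ∈ F(θ), there is a
unique short exact sequence 0 → A → E → B → 0 (unique as a subobject A ⊆ E)
with A, B ∈ F(θ), the composite P → E → B zero (equivalently ν factors through
A), and coker(P → A) ∈ T(θ).  Moreover B is the torsion-free part of coker(ν).
The abelian category abstracts finite-dimensional representations of a quiver
with relations; finite length is imposed via well-founded subobject lattices. -/

open CategoryTheory CategoryTheory.Limits

universe v u
variable {𝒜 : Type u} [Category.{v} 𝒜] [Abelian 𝒜]

/-- Membership in the torsion class T(θ). -/
def InTorsionClass (θ : 𝒜 → ℝ) (E : 𝒜) : Prop :=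
  ∀ (Q : 𝒜) (p : E ⟶ Q), Epi p → ¬ IsZero Q → 0 < θ Q

/-- Membership in the torsion-free class F(θ). -/
def InTorsionFreeClass (θ : 𝒜 → ℝ) (E : 𝒜) : Prop :=
  ∀ (A : 𝒜) (f : A ⟶ E), Mono f → θ A ≤ 0

/-- The subobject `S ⊆ E` gives the required short exact sequence
`0 → S → E → E/S → 0` for the framing `ν : P ⟶ E`. -/
def IsFramingSub (θ : 𝒜 → ℝ) {P E : 𝒜} (ν : P ⟶ E) (S : Subobject E) : Prop :=
  InTorsionFreeClass θ ((S : 𝒜)) ∧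
  InTorsionFreeClass θ (cokernel S.arrow) ∧
  ν ≫ cokernel.π S.arrow = 0 ∧
  ∀ ν' : P ⟶ (S : 𝒜), ν' ≫ S.arrow = ν → InTorsionClass θ (cokernel ν')

set_option linter.unusedSectionVars false

open ZeroObject

namespace FramedAux

variable (θ : 𝒜 → ℝ)

section Theta

variable (hθ : ∀ S : ShortComplex 𝒜, S.ShortExact → θ S.X₂ = θ S.X₁ + θ S.X₃)
include hθ

lemma theta_zero {X : 𝒜} (hX : IsZero X) : θ X = 0 := by
  haveI hm : Mono (0 : X ⟶ X) := ⟨fun f g _ => hX.eq_of_tgt f g⟩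
  haveI he : Epi (0 : X ⟶ X) := ⟨fun f g _ => hX.eq_of_src f g⟩
  have hse : (ShortComplex.mk (0 : X ⟶ X) (0 : X ⟶ X) zero_comp).ShortExact :=
    { exact := ShortComplex.exact_of_isZero_X₂ _ hX }
  have h := hθ _ hse
  simp only [ShortComplex.mk] at h
  linarith

lemma theta_iso {X Y : 𝒜} (e : X ≅ Y) : θ X = θ Y := by
  haveI he : Epi (0 : Y ⟶ (0 : 𝒜)) := ⟨fun f g _ => (isZero_zero 𝒜).eq_of_src f g⟩
  have hse : (ShortComplex.mk e.hom (0 : Y ⟶ (0 : 𝒜)) comp_zero).ShortExact :=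
    { exact := ((ShortComplex.mk e.hom (0 : Y ⟶ (0 : 𝒜)) comp_zero).exact_iff_epi rfl).2
        inferInstance }
  have h := hθ _ hse
  have h0 : θ (0 : 𝒜) = 0 := theta_zero θ hθ (isZero_zero 𝒜)
  simp only [ShortComplex.mk] at h
  linarith

lemma theta_mono {X Y : 𝒜} (f : X ⟶ Y) [Mono f] :
    θ Y = θ X + θ (cokernel f) := by
  have hse : (ShortComplex.mk f (cokernel.π f) (cokernel.condition f)).ShortExact :=
    { exact := ShortComplex.exact_of_g_is_cokernel _ (cokernelIsCokernel f) }
  exact hθ _ hse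

lemma theta_epi {X Q : 𝒜} (g : X ⟶ Q) [Epi g] :
    θ X = θ (kernel g) + θ Q := by
  have hse : (ShortComplex.mk (kernel.ι g) g (kernel.condition g)).ShortExact :=
    { exact := ShortComplex.exact_of_f_is_kernel _ (kernelIsKernel g) }
  exact hθ _ hse

end Theta

lemma tc_of_epi {X Y : 𝒜} (e : X ⟶ Y) [Epi e] (hX : InTorsionClass θ X) :
    InTorsionClass θ Y := fun Q p hp hQ => by
  haveI := hp
  exact hX Q (e ≫ p) inferInstance hQ

lemma tc_zero {X : 𝒜} (hX : IsZero X) : InTorsionClass θ X := by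
  intro Q p hp hQ
  exfalso
  apply hQ
  rw [IsZero.iff_id_eq_zero]
  haveI := hp
  refine (cancel_epi p).1 ?_
  rw [hX.eq_of_src p 0]
  simp

lemma tf_of_mono {X Y : 𝒜} (i : X ⟶ Y) [Mono i] (hY : InTorsionFreeClass θ Y) :
    InTorsionFreeClass θ X := fun A f hf => by
  haveI := hf
  exact hY A (f ≫ i) inferInstance

variable (hθ : ∀ S : ShortComplex 𝒜, S.ShortExact → θ S.X₂ = θ S.X₁ + θ S.X₃)
include hθ

lemma hom_zero {T F : 𝒜} (hT : InTorsionClass θ T) (hF : InTorsionFreeClass θ F)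
    (f : T ⟶ F) : f = 0 := by
  by_cases hz : IsZero (Abelian.image f)
  · rw [← Abelian.image.fac f, hz.eq_of_src (Abelian.image.ι f) 0, comp_zero]
  · exfalso
    have h1 := hT _ (Abelian.factorThruImage f) inferInstance hz
    have h2 := hF _ (Abelian.image.ι f) inferInstance
    linarith

lemma tc_extension {A X : 𝒜} (i : A ⟶ X) [Mono i]
    (hA : InTorsionClass θ A) (hC : InTorsionClass θ (cokernel i)) :
    InTorsionClass θ X := by
  intro Q p hp hQ
  haveI := hp
  by_cases hz : IsZero (cokernel (i ≫ p))
  · haveI : Epi (i ≫ p) := Abelian.epi_of_cokernel_π_eq_zero _ (hz.eq_of_tgt _ _)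
    exact hA Q (i ≫ p) inferInstance hQ
  · have h1 : θ Q = θ (kernel (cokernel.π (i ≫ p))) + θ (cokernel (i ≫ p)) :=
      theta_epi θ hθ (cokernel.π (i ≫ p))
    have h2 : 0 ≤ θ (kernel (cokernel.π (i ≫ p))) := by
      by_cases hzk : IsZero (kernel (cokernel.π (i ≫ p)))
      · rw [theta_zero θ hθ hzk]
      · have := hA _ (Abelian.factorThruImage (i ≫ p)) inferInstance hzk
        linarith
    have hφ0 : i ≫ p ≫ cokernel.π (i ≫ p) = 0 := by
      rw [← Category.assoc, cokernel.condition]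
    have hfac : cokernel.π i ≫ cokernel.desc i (p ≫ cokernel.π (i ≫ p)) hφ0 =
        p ≫ cokernel.π (i ≫ p) := cokernel.π_desc _ _ _
    haveI : Epi (cokernel.π i ≫ cokernel.desc i (p ≫ cokernel.π (i ≫ p)) hφ0) := by
      rw [hfac]; infer_instance
    have h3 : 0 < θ (cokernel (i ≫ p)) :=
      hC _ (cokernel.desc i (p ≫ cokernel.π (i ≫ p)) hφ0) (epi_of_epi (cokernel.π i) _) hz
    linarith

end FramedAux

namespace FramedAux

open CategoryTheory.Abelian
open scoped Pseudoelement

variable (θ : 𝒜 → ℝ)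
variable (hθ : ∀ S : ShortComplex 𝒜, S.ShortExact → θ S.X₂ = θ S.X₁ + θ S.X₃)
include hθ

lemma exists_torsion_sub
    (hArtinian : ∀ X : 𝒜, WellFoundedLT (Subobject X))
    (hNoetherian : ∀ X : 𝒜, WellFoundedGT (Subobject X))
    (X : 𝒜) :
    ∃ t : Subobject X, InTorsionClass θ ((t : 𝒜)) ∧
      InTorsionFreeClass θ (cokernel t.arrow) := by
  obtain ⟨T₀, hT₀mem, hT₀max⟩ := (hNoetherian X).wf.has_min
      {S : Subobject X | InTorsionClass θ ((S : 𝒜))}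
      ⟨⊥, tc_of_epi θ (Subobject.botCoeIsoZero (B := X)).inv
        (tc_zero θ (isZero_zero 𝒜))⟩
  refine ⟨T₀, hT₀mem, ?_⟩
  intro A f hf
  by_contra hpos
  push_neg at hpos
  haveI := hf
  set π : X ⟶ cokernel T₀.arrow := cokernel.π T₀.arrow with hπdef
  -- the set of "positive" subobjects of cokernel T₀.arrow has a minimal element B
  have hmkθ : θ (((Subobject.mk f : Subobject (cokernel T₀.arrow)) : 𝒜)) = θ A :=
    theta_iso θ hθ (Subobject.underlyingIso f)
  obtain ⟨B, hBmem, hBmin⟩ := (hArtinian (cokernel T₀.arrow)).wf.has_min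
      {B : Subobject (cokernel T₀.arrow) | 0 < θ ((B : 𝒜)) ∧ ¬ IsZero ((B : 𝒜))}
      ⟨Subobject.mk f, by
        constructor
        · rw [hmkθ]; exact hpos
        · intro hz
          have := theta_zero θ hθ hz
          rw [hmkθ] at this; linarith⟩
  -- B is a torsion subobject of cokernel T₀.arrow
  have hBtc : InTorsionClass θ ((B : 𝒜)) := by
    intro Q p hp hQ
    haveI := hp
    have hθB : θ ((B : 𝒜)) = θ (kernel p) + θ Q := theta_epi θ hθ p
    rcases le_or_gt (θ (kernel p)) 0 with hk | hk
    · have := hBmem.1; linarith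
    · exfalso
      set K' : Subobject (cokernel T₀.arrow) := Subobject.mk (kernel.ι p ≫ B.arrow)
        with hK'def
      have hK'θ : θ ((K' : 𝒜)) = θ (kernel p) :=
        theta_iso θ hθ (Subobject.underlyingIso _)
      have hK'le : K' ≤ B := Subobject.mk_le_of_comm (kernel.ι p) rfl
      have hK'mem : K' ∈ {B : Subobject (cokernel T₀.arrow) |
          0 < θ ((B : 𝒜)) ∧ ¬ IsZero ((B : 𝒜))} := by
        constructor
        · rw [hK'θ]; exact hk
        · intro hz
          have := theta_zero θ hθ hz
          rw [hK'θ] at this; linarith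
      have heq : K' = B := (lt_or_eq_of_le hK'le).resolve_left (hBmin K' hK'mem)
      have hle2 : B ≤ K' := le_of_eq heq.symm
      have hw : Subobject.ofLE B K' hle2 ≫ K'.arrow = B.arrow := Subobject.ofLE_arrow hle2
      have hsec : ((Subobject.ofLE B K' hle2 ≫
          (Subobject.underlyingIso (kernel.ι p ≫ B.arrow)).hom) ≫ kernel.ι p) ≫ B.arrow
          = 𝟙 _ ≫ B.arrow := by
        simp only [Category.assoc, Category.id_comp]
        rw [Subobject.underlyingIso_hom_comp_eq_mk]
        exact hw
      have hsec' := (cancel_mono B.arrow).1 hsec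
      haveI : IsSplitEpi (kernel.ι p) := IsSplitEpi.mk' ⟨Subobject.ofLE B K' hle2 ≫
          (Subobject.underlyingIso (kernel.ι p ≫ B.arrow)).hom, hsec'⟩
      have hp0 : p = 0 := by
        rw [← cancel_epi (kernel.ι p), kernel.condition, comp_zero]
      apply hQ
      rw [IsZero.iff_id_eq_zero]
      refine (cancel_epi p).1 ?_
      rw [hp0]; simp
  -- pull B back to a subobject of X strictly containing T₀
  set δ : cokernel T₀.arrow ⟶ cokernel B.arrow := cokernel.π B.arrow with hδdef
  set u : X ⟶ cokernel B.arrow := π ≫ δ with hudef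
  set κ : kernel u ⟶ X := kernel.ι u with hκdef
  have hT₀u : T₀.arrow ≫ u = 0 := by
    rw [hudef, ← Category.assoc, cokernel.condition, zero_comp]
  set j : ((T₀ : 𝒜)) ⟶ kernel u := kernel.lift u T₀.arrow hT₀u with hjdef
  have hjκ : j ≫ κ = T₀.arrow := kernel.lift_ι u T₀.arrow hT₀u
  haveI : Mono (j ≫ κ) := by rw [hjκ]; infer_instance
  haveI : Mono j := mono_of_mono j κ
  have hq0 : (κ ≫ π) ≫ δ = 0 := by
    rw [Category.assoc, ← hudef]; exact kernel.condition u
  set q : kernel u ⟶ ((B : 𝒜)) := Abelian.monoLift B.arrow (κ ≫ π) hq0 with hqdef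
  have hq : q ≫ B.arrow = κ ≫ π := Abelian.monoLift_comp B.arrow (κ ≫ π) hq0
  -- exactness facts
  have hexπ : (ShortComplex.mk T₀.arrow π (cokernel.condition T₀.arrow)).Exact :=
    ShortComplex.exact_of_g_is_cokernel _ (cokernelIsCokernel T₀.arrow)
  have hexκ : (ShortComplex.mk κ u (kernel.condition u)).Exact :=
    ShortComplex.exact_of_f_is_kernel _ (kernelIsKernel u)
  -- q is epi
  haveI hqep : Epi q := by
    apply Pseudoelement.epi_of_pseudo_surjective
    intro b
    obtain ⟨x, hx⟩ := Pseudoelement.pseudo_surjective_of_epi π (B.arrow b)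
    have hux : u x = 0 := by
      calc u x = (π ≫ δ) x := by rw [hudef]
        _ = δ (π x) := Pseudoelement.comp_apply _ _ _
        _ = δ (B.arrow b) := by rw [hx]
        _ = (B.arrow ≫ δ) b := (Pseudoelement.comp_apply _ _ _).symm
        _ = 0 := by rw [hδdef, cokernel.condition]; exact Pseudoelement.zero_apply _ _
    obtain ⟨s, hs⟩ := Pseudoelement.pseudo_exact_of_exact hexκ x hux
    refine ⟨s, Pseudoelement.pseudo_injective_of_mono B.arrow ?_⟩
    calc B.arrow (q s) = (q ≫ B.arrow) s := (Pseudoelement.comp_apply _ _ _).symm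
      _ = (κ ≫ π) s := by rw [hq]
      _ = π (κ s) := Pseudoelement.comp_apply _ _ _
      _ = π x := by rw [hs]
      _ = B.arrow b := hx
  -- the short complex T₀ ⟶ kernel u ⟶ B is exact
  have hjq0 : j ≫ q = 0 := by
    rw [← cancel_mono B.arrow, Category.assoc, hq, ← Category.assoc, hjκ, zero_comp]
    exact cokernel.condition T₀.arrow
  have hexjq : (ShortComplex.mk j q hjq0).Exact := by
    apply Pseudoelement.exact_of_pseudo_exact
    intro s hs
    have hπκs : π (κ s) = 0 := by
      calc π (κ s) = (κ ≫ π) s := (Pseudoelement.comp_apply _ _ _).symm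
        _ = (q ≫ B.arrow) s := by rw [hq]
        _ = B.arrow (q s) := Pseudoelement.comp_apply _ _ _
        _ = 0 := by rw [hs]; exact Pseudoelement.apply_zero _
    obtain ⟨a, ha⟩ := Pseudoelement.pseudo_exact_of_exact hexπ (κ s) hπκs
    refine ⟨a, Pseudoelement.pseudo_injective_of_mono κ ?_⟩
    calc κ (j a) = (j ≫ κ) a := (Pseudoelement.comp_apply _ _ _).symm
      _ = T₀.arrow a := by rw [hjκ]
      _ = κ s := ha
  -- cokernel j ≅ B, so kernel u is an extension of torsion by torsion
  have hiso : cokernel j ≅ ((B : 𝒜)) :=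
    IsColimit.coconePointUniqueUpToIso (cokernelIsCokernel j) hexjq.gIsCokernel
  have hKtc : InTorsionClass θ (kernel u) :=
    tc_extension θ hθ j hT₀mem (tc_of_epi θ hiso.inv hBtc)
  set S' : Subobject X := Subobject.mk κ with hS'def
  have hS'tc : InTorsionClass θ ((S' : 𝒜)) :=
    tc_of_epi θ (Subobject.underlyingIso κ).inv hKtc
  have hle : T₀ ≤ S' := Subobject.le_of_comm (j ≫ (Subobject.underlyingIso κ).inv)
    (by rw [Category.assoc, Subobject.underlyingIso_arrow]; exact hjκ)
  have hne : T₀ ≠ S' := by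
    intro h
    have hle2 : S' ≤ T₀ := le_of_eq h.symm
    have hκπ : κ ≫ π = 0 := by
      rw [← Subobject.underlyingIso_arrow κ, ← Subobject.ofLE_arrow hle2, hπdef]
      simp only [Category.assoc, cokernel.condition, comp_zero]
    have hq0' : q = 0 := by
      rw [← cancel_mono B.arrow, hq, hκπ, zero_comp]
    apply hBmem.2
    rw [IsZero.iff_id_eq_zero]
    refine (cancel_epi q).1 ?_
    rw [hq0']; simp
  exact hT₀max S' hS'tc (lt_of_le_of_ne hle hne)

end FramedAux

namespace FramedAux

open CategoryTheory.Abelian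
open scoped Pseudoelement

variable (θ : 𝒜 → ℝ)
variable (hθ : ∀ S : ShortComplex 𝒜, S.ShortExact → θ S.X₂ = θ S.X₁ + θ S.X₃)
include hθ

/-- Existence: the preimage in `E` of the torsion part of `coker ν` is a framing
subobject. -/
lemma exists_framing
    (hArtinian : ∀ X : 𝒜, WellFoundedLT (Subobject X))
    (hNoetherian : ∀ X : 𝒜, WellFoundedGT (Subobject X))
    {P E : 𝒜} (ν : P ⟶ E) (hE : InTorsionFreeClass θ E) :
    ∃ S : Subobject E,
      InTorsionFreeClass θ ((S : 𝒜)) ∧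
      InTorsionFreeClass θ (cokernel S.arrow) ∧
      ν ≫ cokernel.π S.arrow = 0 ∧
      ∀ ν' : P ⟶ (S : 𝒜), ν' ≫ S.arrow = ν → InTorsionClass θ (cokernel ν') := by
  obtain ⟨t, htc, htf⟩ := exists_torsion_sub θ hθ hArtinian hNoetherian (cokernel ν)
  set π : E ⟶ cokernel ν := cokernel.π ν with hπdef
  set σ : cokernel ν ⟶ cokernel t.arrow := cokernel.π t.arrow with hσdef
  set u : E ⟶ cokernel t.arrow := π ≫ σ with hudef
  set κ : kernel u ⟶ E := kernel.ι u with hκdef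
  set S : Subobject E := Subobject.mk κ with hSdef
  set ψ : ((S : 𝒜)) ≅ kernel u := Subobject.underlyingIso κ with hψdef
  have hψarrow : ψ.inv ≫ S.arrow = κ := Subobject.underlyingIso_arrow κ
  have hψhom : ψ.hom ≫ κ = S.arrow := Subobject.underlyingIso_hom_comp_eq_mk κ
  have hexκ : (ShortComplex.mk κ u (kernel.condition u)).Exact :=
    ShortComplex.exact_of_f_is_kernel _ (kernelIsKernel u)
  have hexνπ : (ShortComplex.mk ν π (cokernel.condition ν)).Exact :=
    ShortComplex.exact_of_g_is_cokernel _ (cokernelIsCokernel ν)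
  haveI : Epi u := by rw [hudef]; infer_instance
  -- the quotient E/S is isomorphic to (coker ν)/t
  have hSu0 : S.arrow ≫ u = 0 := by
    rw [← hψhom, Category.assoc, kernel.condition, comp_zero]
  have hexSu : (ShortComplex.mk S.arrow u hSu0).Exact := by
    apply Pseudoelement.exact_of_pseudo_exact
    intro x hx
    obtain ⟨k, hk⟩ := Pseudoelement.pseudo_exact_of_exact hexκ x hx
    refine ⟨ψ.inv k, ?_⟩
    calc S.arrow (ψ.inv k) = (ψ.inv ≫ S.arrow) k := (Pseudoelement.comp_apply _ _ _).symm
      _ = κ k := by rw [hψarrow]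
      _ = x := hk
  have hcokiso : cokernel S.arrow ≅ cokernel t.arrow :=
    IsColimit.coconePointUniqueUpToIso (cokernelIsCokernel S.arrow) hexSu.gIsCokernel
  -- ν factors through S
  have hνu : ν ≫ u = 0 := by
    rw [hudef, ← Category.assoc, hπdef, cokernel.condition, zero_comp]
  have hνfac : ν = (kernel.lift u ν hνu ≫ ψ.inv) ≫ S.arrow := by
    rw [Category.assoc, hψarrow]
    exact (kernel.lift_ι u ν hνu).symm
  refine ⟨S, tf_of_mono θ S.arrow hE, tf_of_mono θ hcokiso.hom htf, ?_, ?_⟩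
  · rw [hνfac, Category.assoc, cokernel.condition, comp_zero]
  · intro ν' hν'
    have hq0 : (κ ≫ π) ≫ σ = 0 := by
      rw [Category.assoc, ← hudef]; exact kernel.condition u
    set q : kernel u ⟶ ((t : 𝒜)) := Abelian.monoLift t.arrow (κ ≫ π) hq0 with hqdef
    have hq : q ≫ t.arrow = κ ≫ π := Abelian.monoLift_comp t.arrow (κ ≫ π) hq0
    haveI hqep : Epi q := by
      apply Pseudoelement.epi_of_pseudo_surjective
      intro b
      obtain ⟨x, hx⟩ := Pseudoelement.pseudo_surjective_of_epi π (t.arrow b)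
      have hux : u x = 0 := by
        calc u x = (π ≫ σ) x := by rw [hudef]
          _ = σ (π x) := Pseudoelement.comp_apply _ _ _
          _ = σ (t.arrow b) := by rw [hx]
          _ = (t.arrow ≫ σ) b := (Pseudoelement.comp_apply _ _ _).symm
          _ = 0 := by rw [hσdef, cokernel.condition]; exact Pseudoelement.zero_apply _ _
      obtain ⟨s, hs⟩ := Pseudoelement.pseudo_exact_of_exact hexκ x hux
      refine ⟨s, Pseudoelement.pseudo_injective_of_mono t.arrow ?_⟩
      calc t.arrow (q s) = (q ≫ t.arrow) s := (Pseudoelement.comp_apply _ _ _).symm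
        _ = (κ ≫ π) s := by rw [hq]
        _ = π (κ s) := Pseudoelement.comp_apply _ _ _
        _ = π x := by rw [hs]
        _ = t.arrow b := hx
    set φ : ((S : 𝒜)) ⟶ ((t : 𝒜)) := ψ.hom ≫ q with hφdef
    haveI : Epi φ := by rw [hφdef]; infer_instance
    have hSπ : S.arrow ≫ π = φ ≫ t.arrow := by
      rw [hφdef, Category.assoc, hq, ← Category.assoc, hψhom]
    have hνφ0 : ν' ≫ φ = 0 := by
      rw [← cancel_mono t.arrow, Category.assoc, ← hSπ, ← Category.assoc, hν',
        zero_comp, hπdef, cokernel.condition]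
    have hexνφ : (ShortComplex.mk ν' φ hνφ0).Exact := by
      apply Pseudoelement.exact_of_pseudo_exact
      intro s hs
      have hπs : π (S.arrow s) = 0 := by
        calc π (S.arrow s) = (S.arrow ≫ π) s := (Pseudoelement.comp_apply _ _ _).symm
          _ = (φ ≫ t.arrow) s := by rw [hSπ]
          _ = t.arrow (φ s) := Pseudoelement.comp_apply _ _ _
          _ = 0 := by rw [hs]; exact Pseudoelement.apply_zero _
      obtain ⟨p, hp⟩ := Pseudoelement.pseudo_exact_of_exact hexνπ (S.arrow s) hπs
      refine ⟨p, Pseudoelement.pseudo_injective_of_mono S.arrow ?_⟩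
      calc S.arrow (ν' p) = (ν' ≫ S.arrow) p := (Pseudoelement.comp_apply _ _ _).symm
        _ = ν p := by rw [hν']
        _ = S.arrow s := hp
    have hiso : cokernel ν' ≅ ((t : 𝒜)) :=
      IsColimit.coconePointUniqueUpToIso (cokernelIsCokernel ν') hexνφ.gIsCokernel
    exact tc_of_epi θ hiso.inv htc

end FramedAux

namespace FramedAux

open CategoryTheory.Abelian
open scoped Pseudoelement

variable (θ : 𝒜 → ℝ)
variable (hθ : ∀ S : ShortComplex 𝒜, S.ShortExact → θ S.X₂ = θ S.X₁ + θ S.X₃)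
include hθ

lemma framing_le {P E : 𝒜} (ν : P ⟶ E) {S₁ S₂ : Subobject E}
    (h1 : IsFramingSub θ ν S₁) (h2 : IsFramingSub θ ν S₂) : S₁ ≤ S₂ := by
  obtain ⟨htf1, htfq1, hz1, hker1⟩ := h1
  obtain ⟨htf2, htfq2, hz2, hker2⟩ := h2
  set ν₁ : P ⟶ ((S₁ : 𝒜)) := Abelian.monoLift S₁.arrow ν hz1 with hν₁def
  have hν₁ : ν₁ ≫ S₁.arrow = ν := Abelian.monoLift_comp S₁.arrow ν hz1
  have htcc := hker1 ν₁ hν₁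
  have hg0 : ν₁ ≫ S₁.arrow ≫ cokernel.π S₂.arrow = 0 := by
    rw [← Category.assoc, hν₁, hz2]
  have hdesc := cokernel.π_desc ν₁ (S₁.arrow ≫ cokernel.π S₂.arrow) hg0
  have h0 := hom_zero θ hθ htcc htfq2 (cokernel.desc ν₁ (S₁.arrow ≫ cokernel.π S₂.arrow) hg0)
  have harr : S₁.arrow ≫ cokernel.π S₂.arrow = 0 := by
    rw [← hdesc, h0, comp_zero]
  exact Subobject.le_of_comm (Abelian.monoLift S₂.arrow S₁.arrow harr)
    (Abelian.monoLift_comp S₂.arrow S₁.arrow harr)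

lemma framing_moreover {P E : 𝒜} (ν : P ⟶ E) (S : Subobject E)
    (hS : IsFramingSub θ ν S) :
    ∃ (T' : 𝒜) (i : T' ⟶ cokernel ν) (p' : cokernel ν ⟶ cokernel S.arrow)
      (w : i ≫ p' = 0),
      InTorsionClass θ T' ∧ (ShortComplex.mk i p' w).ShortExact := by
  obtain ⟨htf, htfq, hz, hker⟩ := hS
  set ν' : P ⟶ ((S : 𝒜)) := Abelian.monoLift S.arrow ν hz with hν'def
  have hν' : ν' ≫ S.arrow = ν := Abelian.monoLift_comp S.arrow ν hz
  have htcc := hker ν' hν'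
  set π : E ⟶ cokernel ν := cokernel.π ν with hπdef
  set πS : E ⟶ cokernel S.arrow := cokernel.π S.arrow with hπSdef
  have hi0 : ν' ≫ S.arrow ≫ π = 0 := by
    rw [← Category.assoc, hν', hπdef, cokernel.condition]
  set i : cokernel ν' ⟶ cokernel ν := cokernel.desc ν' (S.arrow ≫ π) hi0 with hidef
  have hifac : cokernel.π ν' ≫ i = S.arrow ≫ π := cokernel.π_desc _ _ _
  set p' : cokernel ν ⟶ cokernel S.arrow := cokernel.desc ν πS hz with hp'def
  have hp'fac : π ≫ p' = πS := cokernel.π_desc _ _ _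
  have hexνπ : (ShortComplex.mk ν π (cokernel.condition ν)).Exact :=
    ShortComplex.exact_of_g_is_cokernel _ (cokernelIsCokernel ν)
  have hexSπ : (ShortComplex.mk S.arrow πS (cokernel.condition S.arrow)).Exact :=
    ShortComplex.exact_of_g_is_cokernel _ (cokernelIsCokernel S.arrow)
  have hw : i ≫ p' = 0 := by
    rw [← cancel_epi (cokernel.π ν'), ← Category.assoc, hifac, Category.assoc,
      hp'fac, hπSdef, cokernel.condition, comp_zero]
  haveI : Mono i := by
    apply Pseudoelement.mono_of_zero_of_map_zero
    intro c hc
    obtain ⟨s, hs⟩ := Pseudoelement.pseudo_surjective_of_epi (cokernel.π ν') c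
    have hπs : π (S.arrow s) = 0 := by
      calc π (S.arrow s) = (S.arrow ≫ π) s := (Pseudoelement.comp_apply _ _ _).symm
        _ = (cokernel.π ν' ≫ i) s := by rw [hifac]
        _ = i (cokernel.π ν' s) := Pseudoelement.comp_apply _ _ _
        _ = 0 := by rw [hs, hc]
    obtain ⟨p, hp⟩ := Pseudoelement.pseudo_exact_of_exact hexνπ (S.arrow s) hπs
    have hps : ν' p = s := by
      apply Pseudoelement.pseudo_injective_of_mono S.arrow
      calc S.arrow (ν' p) = (ν' ≫ S.arrow) p := (Pseudoelement.comp_apply _ _ _).symm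
        _ = ν p := by rw [hν']
        _ = S.arrow s := hp
    calc c = cokernel.π ν' s := hs.symm
      _ = cokernel.π ν' (ν' p) := by rw [hps]
      _ = (ν' ≫ cokernel.π ν') p := (Pseudoelement.comp_apply _ _ _).symm
      _ = 0 := by rw [cokernel.condition]; exact Pseudoelement.zero_apply _ _
  haveI : Epi (π ≫ p') := by rw [hp'fac, hπSdef]; infer_instance
  haveI : Epi p' := epi_of_epi π p'
  have hex : (ShortComplex.mk i p' hw).Exact := by
    apply Pseudoelement.exact_of_pseudo_exact
    intro b hb
    obtain ⟨x, hx⟩ := Pseudoelement.pseudo_surjective_of_epi π b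
    have hπSx : πS x = 0 := by
      calc πS x = (π ≫ p') x := by rw [hp'fac]
        _ = p' (π x) := Pseudoelement.comp_apply _ _ _
        _ = 0 := by rw [hx, hb]
    obtain ⟨s, hs⟩ := Pseudoelement.pseudo_exact_of_exact hexSπ x hπSx
    refine ⟨cokernel.π ν' s, ?_⟩
    calc i (cokernel.π ν' s) = (cokernel.π ν' ≫ i) s := (Pseudoelement.comp_apply _ _ _).symm
      _ = (S.arrow ≫ π) s := by rw [hifac]
      _ = π (S.arrow s) := Pseudoelement.comp_apply _ _ _
      _ = π x := by rw [hs]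
      _ = b := hx
  exact ⟨cokernel ν', i, p', hw, htcc, { exact := hex }⟩

end FramedAux

theorem framed_torsion_decomposition
    (θ : 𝒜 → ℝ)
    (hθadd : ∀ S : ShortComplex 𝒜, S.ShortExact → θ S.X₂ = θ S.X₁ + θ S.X₃)
    (hArtinian : ∀ X : 𝒜, WellFoundedLT (Subobject X))
    (hNoetherian : ∀ X : 𝒜, WellFoundedGT (Subobject X))
    (P E : 𝒜) (ν : P ⟶ E) (hE : InTorsionFreeClass θ E) :
    (∃! S : Subobject E, IsFramingSub θ ν S) ∧
    -- moreover, for such S, the quotient B = E/S is the torsion-free part of coker ν: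
    (∀ S : Subobject E, IsFramingSub θ ν S →
      ∃ (T' : 𝒜) (i : T' ⟶ cokernel ν) (p' : cokernel ν ⟶ cokernel S.arrow)
        (w : i ≫ p' = 0),
        InTorsionClass θ T' ∧ (ShortComplex.mk i p' w).ShortExact) := by
  obtain ⟨S₀, h1, h2, h3, h4⟩ :=
    FramedAux.exists_framing θ hθadd hArtinian hNoetherian ν hE
  refine ⟨⟨S₀, ⟨h1, h2, h3, h4⟩, fun S hS =>
    le_antisymm (FramedAux.framing_le θ hθadd ν hS ⟨h1, h2, h3, h4⟩)
      (FramedAux.framing_le θ hθadd ν ⟨h1, h2, h3, h4⟩ hS)⟩,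
    fun S hS => FramedAux.framing_moreover θ hθadd ν S hS⟩
end
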